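/- arXiv:2211.03228 — 10 statements merged into one kernel-verified Lean document; each statement's English description precedes it below -/
import Mathlib

section
/- Let ν be an infinite regular cardinal and let Q = [ν]² be the poset of pairs (α,β) with α < β < ν, ordered componentwise: (α,β) ≤ (α',β') iff α ≤ α' and β ≤ β'. Then Cov(Q) = ν. -/
open Cardinal

/-- The chain covering number of a subset `S` of a poset: the least cardinality
of a family of chains whose union is `S`. -/
noncomputable def chainCov {α : Type*} [PartialOrder α] (S : Set α) : Cardinal :=
  sInf {c : Cardinal | ∃ F : Set (Set α),
    (∀ T ∈ F, T ⊆ S ∧ IsChain (· ≤ ·) T) ∧ ⋃₀ F = S ∧ #F = c}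

/-- The poset `[ν]²` of pairs `(α, β)` with `α < β < ν`, ordered componentwise
(as a subposet of the componentwise product). -/
def upperHalf (ν : Cardinal) : Type _ := {p : ν.ord.ToType × ν.ord.ToType // p.1 < p.2}

noncomputable instance (ν : Cardinal) : PartialOrder (upperHalf ν) :=
  Subtype.partialOrder _

lemma bdd_of_small (ν : Cardinal) (hν : ℵ₀ ≤ ν) (hreg : ν.IsRegular)
    (s : Set ν.ord.ToType) (hs : #s < ν) : ∃ c, ∀ x ∈ s, x < c := by
  set e := @Ordinal.ToType.mk ν.ord
  set f : s → Ordinal := fun x => (e.symm x.1).1 + 1 with hf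
  have hlim := Cardinal.isSuccLimit_ord hν
  have hfl : ∀ x, f x < ν.ord := fun x => by
    show (e.symm x.1).1 + 1 < ν.ord
    rw [Ordinal.add_one_eq_succ]; exact hlim.succ_lt (e.symm x.1).2
  have hsup : iSup f < ν.ord := by
    apply Ordinal.iSup_lt_ord _ hfl
    rwa [hreg.cof_eq]
  refine ⟨e ⟨iSup f, hsup⟩, fun x hx => ?_⟩
  have h1 : (e.symm x).1 < iSup f := by
    calc (e.symm x).1 < f ⟨x, hx⟩ := lt_add_one _
    _ ≤ iSup f := le_ciSup (Ordinal.bddAbove_range f) ⟨x, hx⟩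
  have : e.symm x < (⟨iSup f, hsup⟩ : Set.Iio ν.ord) := h1
  have h2 := e.lt_iff_lt.2 this
  simpa using h2

lemma unb_helper {ν : Cardinal} {T : Set (upperHalf ν)} (hc : IsChain (· ≤ ·) T)
    {a a' : ν.ord.ToType} (hlt : a < a')
    (h : ∀ c, ∃ b, (∃ p ∈ T, p.1 = (a, b)) ∧ c < b)
    (h' : ∀ c, ∃ b, (∃ p ∈ T, p.1 = (a', b)) ∧ c < b) : False := by
  obtain ⟨b', ⟨p', hp'T, hp'⟩, -⟩ := h' a'
  obtain ⟨b, ⟨p, hpT, hp⟩, hb⟩ := h b'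
  have hne : p ≠ p' := by
    intro e
    rw [e, hp'] at hp
    exact hlt.ne' (congrArg Prod.fst hp)
  rcases hc hpT hp'T hne with hle | hle
  · have : p.1 ≤ p'.1 := hle
    rw [hp, hp'] at this
    exact absurd this.2 (not_le.2 hb)
  · have : p'.1 ≤ p.1 := hle
    rw [hp, hp'] at this
    exact absurd this.1 (not_le.2 hlt)

lemma unb_unique {ν : Cardinal} {T : Set (upperHalf ν)} (hc : IsChain (· ≤ ·) T)
    {a a' : ν.ord.ToType}
    (h : ∀ c, ∃ b, (∃ p ∈ T, p.1 = (a, b)) ∧ c < b)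
    (h' : ∀ c, ∃ b, (∃ p ∈ T, p.1 = (a', b)) ∧ c < b) : a = a' := by
  by_contra hne
  rcases Ne.lt_or_gt hne with hlt | hlt
  · exact unb_helper hc hlt h h'
  · exact unb_helper hc hlt h' h

theorem cov_upperHalf_of_regular (ν : Cardinal) (hν : ℵ₀ ≤ ν) (hreg : ν.IsRegular) :
    chainCov (Set.univ : Set (upperHalf ν)) = ν := by
  classical
  have hone : (1 : Cardinal) < ν := one_lt_aleph0.trans_le hν
  have hnomax : ∀ a : ν.ord.ToType, ∃ b, a < b := by
    intro a
    obtain ⟨c, hc⟩ := bdd_of_small ν hν hreg {a} (by simpa using hone)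
    exact ⟨c, hc a rfl⟩
  -- the covering by columns
  set C : ν.ord.ToType → Set (upperHalf ν) := fun a => {p | p.1.1 = a} with hC
  have hCinj : Function.Injective C := by
    intro a a' h
    obtain ⟨b, hb⟩ := hnomax a
    have : (⟨(a, b), hb⟩ : upperHalf ν) ∈ C a := rfl
    rw [h] at this
    exact this
  have hmem : ν ∈ {c : Cardinal | ∃ F : Set (Set (upperHalf ν)),
      (∀ T ∈ F, T ⊆ Set.univ ∧ IsChain (· ≤ ·) T) ∧ ⋃₀ F = Set.univ ∧ #F = c} := by
    refine ⟨Set.range C, ?_, ?_, ?_⟩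
    · rintro T ⟨a, rfl⟩
      refine ⟨Set.subset_univ _, ?_⟩
      intro p hp q hq hpq
      have hp' : p.1.1 = a := hp
      have hq' : q.1.1 = a := hq
      rcases le_total p.1.2 q.1.2 with h | h
      · exact Or.inl ⟨le_of_eq (hp'.trans hq'.symm), h⟩
      · exact Or.inr ⟨le_of_eq (hq'.trans hp'.symm), h⟩
    · ext p
      simp only [Set.mem_sUnion, Set.mem_univ, iff_true]
      exact ⟨C p.1.1, ⟨p.1.1, rfl⟩, rfl⟩
    · rw [Cardinal.mk_range_eq _ hCinj, Cardinal.mk_toType, Cardinal.card_ord]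
  apply le_antisymm
  · exact csInf_le' hmem
  · apply le_csInf ⟨ν, hmem⟩
    rintro c ⟨F, hF, hcov, rfl⟩
    by_contra hlt
    push_neg at hlt
    -- the set of "columns with unbounded fibers"
    set Unb : Set (upperHalf ν) → ν.ord.ToType → Prop :=
      fun T a => ∀ c, ∃ b, (∃ p ∈ T, p.1 = (a, b)) ∧ c < b with hUnb
    set S₁ : Set ν.ord.ToType := {a | ∃ T ∈ F, Unb T a} with hS₁
    have hS₁card : #S₁ < ν := by
      have : ∃ g : S₁ → F, ∀ a : S₁, Unb (g a).1 a.1 := by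
        refine ⟨fun a => ⟨a.2.choose, a.2.choose_spec.1⟩, fun a => a.2.choose_spec.2⟩
      obtain ⟨g, hg⟩ := this
      have hginj : Function.Injective g := by
        intro a a' h
        have h1 := hg a
        have h2 := hg a'
        rw [h] at h1
        exact Subtype.ext (unb_unique (hF _ (g a').2).2 h1 h2)
      exact lt_of_le_of_lt (Cardinal.mk_le_of_injective hginj) hlt
    obtain ⟨α₀, hα₀⟩ := bdd_of_small ν hν hreg S₁ hS₁card
    have hα₀nS : α₀ ∉ S₁ := fun h => lt_irrefl _ (hα₀ α₀ h)
    -- for each chain get a bound on the fiber at α₀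
    have hbddT : ∀ T : F, ∃ c, ∀ b, (∃ p ∈ T.1, p.1 = (α₀, b)) → b ≤ c := by
      intro T
      have : ¬ Unb T.1 α₀ := fun h => hα₀nS ⟨T.1, T.2, h⟩
      rw [hUnb, not_forall] at this
      obtain ⟨c, hc⟩ := this
      push_neg at hc
      exact ⟨c, fun b hb => hc b hb⟩
    choose bT hbT using hbddT
    set S₂ : Set ν.ord.ToType := Set.range bT ∪ {α₀} with hS₂
    have hS₂card : #S₂ < ν := by
      apply lt_of_le_of_lt (Cardinal.mk_union_le _ _)
      apply Cardinal.add_lt_of_lt hν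
      · exact lt_of_le_of_lt Cardinal.mk_range_le hlt
      · simpa using hone
    obtain ⟨β, hβ⟩ := bdd_of_small ν hν hreg S₂ hS₂card
    have hαβ : α₀ < β := hβ α₀ (Or.inr rfl)
    set p : upperHalf ν := ⟨(α₀, β), hαβ⟩ with hp
    have : p ∈ ⋃₀ F := by rw [hcov]; trivial
    obtain ⟨T, hTF, hpT⟩ := this
    have h1 : β ≤ bT ⟨T, hTF⟩ := hbT ⟨T, hTF⟩ β ⟨p, hpT, rfl⟩
    have h2 : bT ⟨T, hTF⟩ < β := hβ _ (Or.inl ⟨⟨T, hTF⟩, rfl⟩)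
    exact absurd (h1.trans_lt h2) (lt_irrefl β)
end

section
/- For ν an infinite successor cardinal, the poset [ν]² = {(α,β) : α < β < ν} ordered componentwise cannot be covered by fewer than ν chains. -/
open Cardinal

lemma upperHalf.le_def {ν : Cardinal} {x y : upperHalf ν} :
    x ≤ y ↔ x.1.1 ≤ y.1.1 ∧ x.1.2 ≤ y.1.2 := Iff.rfl

lemma mk_Iic_lt {ν : Cardinal} (hν : ℵ₀ ≤ ν) (α : ν.ord.ToType) : #(Set.Iic α) < ν := by
  have h1 : #(Set.Iio α) < ν := mk_Iio_ord_toType α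
  have h2 : (Set.Iic α : Set ν.ord.ToType) = Set.Iio α ∪ {α} := by
    ext x; simp [le_iff_lt_or_eq]
  calc #(Set.Iic α) ≤ #(Set.Iio α) + #({α} : Set ν.ord.ToType) := by
        rw [h2]; exact mk_union_le _ _
    _ < ν := add_lt_of_lt hν h1 (by simp; exact one_lt_aleph0.trans_le hν)

lemma mk_Ioi_ge {ν : Cardinal} (hν : ℵ₀ ≤ ν) (α : ν.ord.ToType) : ν ≤ #(Set.Ioi α) := by
  by_contra h
  push_neg at h
  have : (Set.univ : Set ν.ord.ToType) = Set.Iic α ∪ Set.Ioi α := (Set.Iic_union_Ioi).symm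
  have hle : #(ν.ord.ToType) ≤ #(Set.Iic α) + #(Set.Ioi α) := by
    rw [← mk_univ (α := ν.ord.ToType), this]
    exact mk_union_le _ _
  rw [mk_ord_toType] at hle
  exact absurd hle (not_le.2 (add_lt_of_lt hν (mk_Iic_lt hν α) h))

theorem cov_upperHalf_of_succ (ν κ : Cardinal) (hν : ℵ₀ ≤ ν) (hsucc : ν = Order.succ κ) :
    ν ≤ chainCov (Set.univ : Set (upperHalf ν)) := by
  -- κ is infinite
  have hκ : ℵ₀ ≤ κ := by
    by_contra h
    push_neg at h
    have : Order.succ κ < ℵ₀ := by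
      obtain ⟨n, rfl⟩ := lt_aleph0.mp h
      rw [Cardinal.succ_natCast]
      simpa using nat_lt_aleph0 (n+1)
    exact absurd (hsucc ▸ hν) (not_le.2 this)
  have hreg : ν.IsRegular := hsucc ▸ isRegular_succ hκ
  apply le_csInf
  · refine ⟨#(Set.range (fun x : upperHalf ν => ({x} : Set (upperHalf ν)))),
      Set.range (fun x : upperHalf ν => ({x} : Set (upperHalf ν))), ?_, ?_, rfl⟩
    · rintro T ⟨x, rfl⟩
      exact ⟨Set.subset_univ _, Set.Subsingleton.isChain (Set.subsingleton_singleton)⟩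
    · ext x; simp
  intro c hc
  obtain ⟨F, hF, hcov, rfl⟩ := hc
  by_contra h
  push_neg at h
  -- for every α, some chain has a fiber of size ν above α
  have key : ∀ α : ν.ord.ToType, ∃ T : F,
      ν ≤ #{β : ν.ord.ToType | ∃ hb : α < β, (⟨(α, β), hb⟩ : upperHalf ν) ∈ (T : Set (upperHalf ν))} := by
    intro α
    by_contra hk
    push_neg at hk
    have hU : (⋃ T : F, {β : ν.ord.ToType |
        ∃ hb : α < β, (⟨(α, β), hb⟩ : upperHalf ν) ∈ (T : Set (upperHalf ν))}) = Set.Ioi α := by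
      ext β
      constructor
      · rintro ⟨s, ⟨T, rfl⟩, hb, -⟩
        exact hb
      · intro hb
        have hx : (⟨(α, β), hb⟩ : upperHalf ν) ∈ ⋃₀ F := hcov ▸ Set.mem_univ _
        obtain ⟨T, hT, hxT⟩ := hx
        exact ⟨_, ⟨⟨T, hT⟩, rfl⟩, hb, hxT⟩
    have hlt : #(⋃ T : F, {β : ν.ord.ToType |
        ∃ hb : α < β, (⟨(α, β), hb⟩ : upperHalf ν) ∈ (T : Set (upperHalf ν))}) < ν :=
      (card_iUnion_lt_iff_forall_of_isRegular hreg h).mpr hk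
    rw [hU] at hlt
    exact absurd (mk_Ioi_ge hν α) (not_le.2 hlt)
  choose g hg using key
  -- g is not injective
  have hni : ¬ Function.Injective g := by
    intro hinj
    have := mk_le_of_injective hinj
    rw [mk_ord_toType] at this
    exact absurd this (not_le.2 h)
  rw [Function.not_injective_iff] at hni
  obtain ⟨α, α', hgeq, hne⟩ := hni
  -- symmetric core argument
  have core : ∀ a b : ν.ord.ToType, a < b → g a = g b → False := by
    intro a b hab hgab
    -- the fiber at b is nonempty
    have hb := hg b
    rw [← hgab] at hb
    have hbne : {β : ν.ord.ToType |
        ∃ hb2 : b < β, (⟨(b, β), hb2⟩ : upperHalf ν) ∈ ((g a : Set (upperHalf ν)))}.Nonempty := by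
      rw [← Set.nonempty_coe_sort, ← mk_ne_zero_iff]
      intro h0
      rw [h0] at hb
      exact absurd hb (not_le.2 (aleph0_pos.trans_le hν))
    obtain ⟨β', hβ'lt, hβ'T⟩ := hbne
    -- the fiber at a is bounded by β'
    have hchain : IsChain (· ≤ ·) ((g a : Set (upperHalf ν))) := (hF _ (g a).2).2
    have hsub : {β : ν.ord.ToType |
        ∃ ha2 : a < β, (⟨(a, β), ha2⟩ : upperHalf ν) ∈ ((g a : Set (upperHalf ν)))} ⊆ Set.Iic β' := by
      rintro β ⟨haβ, hβT⟩
      have hxy : (⟨(a, β), haβ⟩ : upperHalf ν) ≠ ⟨(b, β'), hβ'lt⟩ := by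
        intro heq
        exact absurd (congrArg (fun z : upperHalf ν => z.1.1) heq) (ne_of_lt hab)
      rcases hchain hβT hβ'T hxy with hle | hle
      · exact (upperHalf.le_def.mp hle).2
      · exact absurd (upperHalf.le_def.mp hle).1 (not_le.2 hab)
    exact absurd ((hg a).trans (mk_le_mk_of_subset hsub)) (not_le.2 (mk_Iic_lt hν β'))
  rcases hne.lt_or_gt with hlt | hlt
  · exact core α α' hlt hgeq
  · exact core α' α hlt hgeq.symm
end

section
/- Let P be a poset and let (P_i)_{i∈D} be the subposets induced on the connected components of the incomparability graph of P. Then either Cov(P) = Cov(P_i) for some i ∈ D, or Cov(P) = sup_{i∈D} Cov(P_i). -/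
open Cardinal

/-- The incomparability graph of a poset: edges are the incomparable pairs. -/
def incGraph (α : Type*) [PartialOrder α] : SimpleGraph α where
  Adj x y := ¬ x ≤ y ∧ ¬ y ≤ x
  symm := ⟨fun _ _ h => ⟨h.2, h.1⟩⟩
  loopless := ⟨fun _ h => h.1 le_rfl⟩

section aux
variable {α : Type u} [PartialOrder α]

lemma chainCov_le_mk {S : Set α} (F : Set (Set α))
    (h1 : ∀ T ∈ F, T ⊆ S ∧ IsChain (· ≤ ·) T) (h2 : ⋃₀ F = S) :
    chainCov S ≤ #F :=
  csInf_le' ⟨F, h1, h2, rfl⟩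

lemma exists_min_cover (S : Set α) :
    ∃ F : Set (Set α), (∀ T ∈ F, T ⊆ S ∧ IsChain (· ≤ ·) T) ∧ ⋃₀ F = S ∧
      Cardinal.mk F = chainCov S := by
  have hne : {c : Cardinal | ∃ F : Set (Set α),
      (∀ T ∈ F, T ⊆ S ∧ IsChain (· ≤ ·) T) ∧ ⋃₀ F = S ∧ #F = c}.Nonempty := by
    refine ⟨_, (fun x => {x}) '' S, ?_, ?_, rfl⟩
    · rintro T ⟨x, hx, rfl⟩
      exact ⟨Set.singleton_subset_iff.2 hx, Set.Subsingleton.isChain (by simp)⟩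
    · ext x
      simp [Set.mem_sUnion]
  have := csInf_mem hne
  obtain ⟨F, hF1, hF2, hF3⟩ := this
  exact ⟨F, hF1, hF2, hF3⟩

lemma chainCov_pos {S : Set α} (hS : S.Nonempty) : chainCov S ≠ 0 := by
  intro h0
  obtain ⟨F, _, hF2, hF3⟩ := exists_min_cover S
  rw [h0, Cardinal.mk_eq_zero_iff] at hF3
  have : F = ∅ := by
    ext T; exact ⟨fun hT => (hF3.false ⟨T, hT⟩).elim, fun h => h.elim⟩
  rw [this] at hF2
  simp at hF2
  exact hS.ne_empty hF2.symm

lemma comp_eq_of_incomp {x y : α} (h1 : ¬ x ≤ y) (h2 : ¬ y ≤ x) :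
    (incGraph α).connectedComponentMk x = (incGraph α).connectedComponentMk y :=
  SimpleGraph.ConnectedComponent.sound (SimpleGraph.Adj.reachable (And.intro h1 h2 :
    (incGraph α).Adj x y))

lemma chainCov_comp_le (c : (incGraph α).ConnectedComponent) :
    chainCov c.supp ≤ chainCov (Set.univ : Set α) := by
  obtain ⟨F, hF1, hF2, hF3⟩ := exists_min_cover (Set.univ : Set α)
  have key : chainCov c.supp ≤ #((fun T => T ∩ c.supp) '' F) := by
    apply chainCov_le_mk
    · rintro T' ⟨T, hT, rfl⟩
      exact ⟨Set.inter_subset_right, ((hF1 T hT).2).mono Set.inter_subset_left⟩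
    · rw [Set.sUnion_image]
      have : ⋃ T ∈ F, T ∩ c.supp = (⋃ T ∈ F, T) ∩ c.supp := by
        simp [Set.iUnion_inter]
      rw [this, ← Set.sUnion_eq_biUnion, hF2, Set.univ_inter]
  calc chainCov c.supp ≤ _ := key
    _ ≤ #F := Cardinal.mk_image_le
    _ = _ := hF3

end aux

theorem cov_eq_component_or_sup (α : Type u) [PartialOrder α] :
    (∃ c : (incGraph α).ConnectedComponent,
        chainCov (Set.univ : Set α) = chainCov c.supp) ∨
      chainCov (Set.univ : Set α) =
        ⨆ c : (incGraph α).ConnectedComponent, chainCov c.supp := by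
  right
  set κ := ⨆ c : (incGraph α).ConnectedComponent, chainCov c.supp with hκ
  have hbdd : BddAbove (Set.range fun c : (incGraph α).ConnectedComponent =>
      chainCov c.supp) := ⟨chainCov (Set.univ : Set α), by
    rintro x ⟨c, rfl⟩; exact chainCov_comp_le c⟩
  have hle : κ ≤ chainCov (Set.univ : Set α) :=
    ciSup_le' fun c => chainCov_comp_le c
  refine le_antisymm ?_ hle
  -- now show chainCov univ ≤ κ
  rcases isEmpty_or_nonempty α with hα | hα
  · have : chainCov (Set.univ : Set α) ≤ #(∅ : Set (Set α)) := by
      apply chainCov_le_mk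
      · rintro T ⟨⟩
      · simp [Set.eq_empty_of_isEmpty (Set.univ : Set α)]
    calc chainCov (Set.univ : Set α) ≤ #(∅ : Set (Set α)) := this
      _ = 0 := by simp
      _ ≤ κ := zero_le
  · -- κ ≠ 0
    obtain ⟨a⟩ := hα
    have hκ0 : κ ≠ 0 := by
      intro h0
      have h1 : chainCov ((incGraph α).connectedComponentMk a).supp ≤ κ :=
        le_ciSup hbdd _
      have h2 : chainCov ((incGraph α).connectedComponentMk a).supp ≠ 0 :=
        chainCov_pos ⟨a, by simp [SimpleGraph.ConnectedComponent.mem_supp_iff]⟩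
      rw [h0, nonpos_iff_eq_zero] at h1
      exact h2 h1
    -- index type
    set ι := κ.out with hι
    have hmkι : #ι = κ := Cardinal.mk_out κ
    have hιne : Nonempty ι := Cardinal.mk_ne_zero_iff.1 (hmkι ▸ hκ0)
    -- choose minimal covers of each component
    have hchoice : ∀ c : (incGraph α).ConnectedComponent,
        ∃ g : ι → Set α, (∀ j, g j ⊆ c.supp ∧ IsChain (· ≤ ·) (g j)) ∧
          (∀ x ∈ c.supp, ∃ j, x ∈ g j) := by
      intro c
      obtain ⟨F, hF1, hF2, hF3⟩ := exists_min_cover c.supp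
      have hFle : #F ≤ #ι := by
        rw [hmkι, hF3]; exact le_ciSup hbdd c
      have hFne : Nonempty F := by
        obtain ⟨v, hv⟩ : c.supp.Nonempty := c.exists_rep.imp (fun v hv => by
          exact hv)
        rw [← hF2] at hv
        obtain ⟨T, hT, _⟩ := hv
        exact ⟨T, hT⟩
      obtain ⟨e⟩ : Nonempty (F ↪ ι) := Cardinal.le_def _ _ |>.1 hFle
      refine ⟨fun j => (Function.invFun (⇑e) j).1, fun j => ?_, fun x hx => ?_⟩
      · exact hF1 _ (Function.invFun (⇑e) j).2
      · rw [← hF2] at hx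
        obtain ⟨T, hT, hxT⟩ := hx
        obtain ⟨j, hj⟩ := Function.invFun_surjective e.injective ⟨T, hT⟩
        exact ⟨j, by simp only []; rw [hj]; exact hxT⟩
    choose g hg1 hg2 using hchoice
    set T : ι → Set α := fun j => ⋃ c, g c j with hT
    have : chainCov (Set.univ : Set α) ≤ #(Set.range T) := by
      apply chainCov_le_mk
      · rintro S ⟨j, rfl⟩
        refine ⟨Set.subset_univ _, ?_⟩
        rintro x hx y hy hxy
        simp only [hT, Set.mem_iUnion] at hx hy
        obtain ⟨c, hxc⟩ := hx
        obtain ⟨c', hyc⟩ := hy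
        by_cases hcc : c = c'
        · subst hcc
          exact (hg1 c j).2 hxc hyc hxy
        · by_contra hcmp
          push_neg at hcmp
          apply hcc
          have hx' : x ∈ c.supp := (hg1 c j).1 hxc
          have hy' : y ∈ c'.supp := (hg1 c' j).1 hyc
          rw [SimpleGraph.ConnectedComponent.mem_supp_iff] at hx' hy'
          rw [← hx', ← hy']
          exact comp_eq_of_incomp hcmp.1 hcmp.2
      · apply Set.eq_univ_of_forall
        intro x
        have hx : x ∈ ((incGraph α).connectedComponentMk x).supp := by
          simp [SimpleGraph.ConnectedComponent.mem_supp_iff]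
        obtain ⟨j, hj⟩ := hg2 _ x hx
        exact ⟨T j, ⟨j, rfl⟩, Set.mem_iUnion.2 ⟨_, hj⟩⟩
    calc chainCov (Set.univ : Set α) ≤ #(Set.range T) := this
      _ ≤ #ι := Cardinal.mk_range_le
      _ = κ := hmkι
end

section
/- Let P be a poset and x < y two elements in the same connected component of the incomparability graph Inc(P). Let x = x₀, x₁, ..., x_{n+1} = y be a shortest path in Inc(P) from x to y. Then x_i < x_j whenever i + 2 ≤ j. -/
open Cardinal

namespace SPIAux

variable {V : Type*} {G : SimpleGraph V}

/-- Initial segment of a walk. -/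
def wtake : {u v : V} → (p : G.Walk u v) → (n : ℕ) → G.Walk u (p.getVert n)
  | _, _, p, 0 => SimpleGraph.Walk.nil.copy rfl (p.getVert_zero).symm
  | _, _, .nil, _ + 1 => SimpleGraph.Walk.nil
  | _, _, .cons h q, n + 1 => SimpleGraph.Walk.cons h (wtake q n)

lemma length_wtake : ∀ {u v : V} (p : G.Walk u v) (n : ℕ),
    (wtake p n).length = min n p.length
  | _, _, p, 0 => by simp [wtake]
  | _, _, .nil, n + 1 => by simp [wtake]
  | _, _, .cons h q, n + 1 => by
      simp [wtake, length_wtake q n]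

lemma length_drop : ∀ {u v : V} (p : G.Walk u v) (n : ℕ),
    (p.drop n).length = p.length - n
  | _, _, .nil, n => by cases n <;> simp [SimpleGraph.Walk.drop]
  | _, _, .cons h q, 0 => by simp [SimpleGraph.Walk.drop]
  | _, _, .cons h q, n + 1 => by
      simp [SimpleGraph.Walk.drop, SimpleGraph.Walk.length_copy, length_drop q n]

end SPIAux

theorem shortest_path_increasing {α : Type u} [PartialOrder α] {x y : α}
    (hxy : x < y) (p : (incGraph α).Walk x y)
    (hshort : ∀ q : (incGraph α).Walk x y, p.length ≤ q.length) :
    ∀ i j : ℕ, i + 2 ≤ j → j ≤ p.length → p.getVert i < p.getVert j := by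
  -- distinctness of vertices at distance ≥ 2
  have hne : ∀ i j : ℕ, i + 2 ≤ j → j ≤ p.length → p.getVert i ≠ p.getVert j := by
    intro i j hij hj heq
    have hq := hshort ((SPIAux.wtake p i).append ((p.drop j).copy heq.symm rfl))
    simp [SimpleGraph.Walk.length_append, SimpleGraph.Walk.length_copy,
      SPIAux.length_wtake, SPIAux.length_drop] at hq
    omega
  -- comparability of vertices at distance ≥ 2
  have hcomp : ∀ i j : ℕ, i + 2 ≤ j → j ≤ p.length →
      p.getVert i < p.getVert j ∨ p.getVert j < p.getVert i := by
    intro i j hij hj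
    by_contra hcon
    push_neg at hcon
    have hne' := hne i j hij hj
    have hadj : (incGraph α).Adj (p.getVert i) (p.getVert j) := by
      constructor
      · intro hle
        exact hcon.1 (lt_of_le_of_ne hle hne')
      · intro hle
        exact hcon.2 (lt_of_le_of_ne hle (Ne.symm hne'))
    have hq := hshort ((SPIAux.wtake p i).append (SimpleGraph.Walk.cons hadj (p.drop j)))
    simp [SimpleGraph.Walk.length_append, SimpleGraph.Walk.length_cons,
      SPIAux.length_wtake, SPIAux.length_drop] at hq
    omega
  -- base case: x₀ < x_j for all j ≥ 2 (downward induction from y)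
  have hbase : ∀ d j : ℕ, p.length - j ≤ d → 2 ≤ j → j ≤ p.length →
      p.getVert 0 < p.getVert j := by
    intro d
    induction d with
    | zero =>
      intro j hd h2 hj
      have : j = p.length := by omega
      subst this
      simpa [p.getVert_length] using hxy
    | succ d ih =>
      intro j hd h2 hj
      rcases eq_or_lt_of_le hj with h | h
      · subst h
        simpa [p.getVert_length] using hxy
      · have hnext : p.getVert 0 < p.getVert (j + 1) := ih (j + 1) (by omega) (by omega) (by omega)
        rcases hcomp 0 j h2 hj with hlt | hlt
        · exact hlt
        · exfalso
          have hadj := p.adj_getVert_succ h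
          exact hadj.1 (le_of_lt (lt_trans hlt hnext))
  -- main induction on i
  intro i
  induction i with
  | zero =>
    intro j h2 hj
    exact hbase (p.length - j) j le_rfl h2 hj
  | succ i ih =>
    intro j h2 hj
    rcases hcomp (i + 1) j h2 hj with hlt | hlt
    · exact hlt
    · exfalso
      have h1 : p.getVert i < p.getVert j := ih j (by omega) hj
      have hadj := p.adj_getVert_succ (i := i) (by omega)
      exact hadj.1 (le_of_lt (lt_trans h1 hlt))
end

section
/- Let P be a poset, x < y in P, and let x = x₀, x₁, ..., x_{n+1} = y be a shortest path in the incomparability graph Inc(P) joining x to y. Then the interval [x,y] = {z : x ≤ z ≤ y} is contained in the union over i = 1,...,n of the sets Inc_{x_i}(P) of elements incomparable to x_i. -/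
open Cardinal

lemma exists_switch {f : ℕ → Prop} : ∀ n : ℕ, f 0 → ¬ f n → ∃ i < n, f i ∧ ¬ f (i + 1)
  | 0, h0, hn => absurd h0 hn
  | (n + 1), h0, hn => by
      by_cases h : f n
      · exact ⟨n, Nat.lt_succ_self n, h, hn⟩
      · obtain ⟨i, hi, h1, h2⟩ := exists_switch n h0 h
        exact ⟨i, hi.trans (Nat.lt_succ_self n), h1, h2⟩

theorem interval_subset_incomparables {α : Type u} [PartialOrder α] {x y : α}
    (hxy : x < y) (p : (incGraph α).Walk x y)
    (hshort : ∀ q : (incGraph α).Walk x y, p.length ≤ q.length) :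
    ∀ z ∈ Set.Icc x y, ∃ i : ℕ, 1 ≤ i ∧ i + 1 ≤ p.length ∧
      ¬ z ≤ p.getVert i ∧ ¬ p.getVert i ≤ z := by
  intro z hz
  classical
  have hlen0 : 0 < p.length := by
    rcases Nat.eq_zero_or_pos p.length with h | h
    · exact absurd (SimpleGraph.Walk.eq_of_length_eq_zero h) hxy.ne
    · exact h
  have hlen2 : 2 ≤ p.length := by
    by_contra h
    have h1 : p.length = 1 := by omega
    have ha := p.adj_getVert_succ (i := 0) hlen0
    rw [p.getVert_zero] at ha
    have hy : p.getVert 1 = y := by rw [← h1]; exact p.getVert_length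
    rw [hy] at ha
    exact ha.1 hxy.le
  by_cases hzy : z = y
  · refine ⟨p.length - 1, by omega, by omega, ?_⟩
    have ha := p.adj_getVert_succ (i := p.length - 1) (by omega)
    have he : p.getVert (p.length - 1 + 1) = y := by
      rw [show p.length - 1 + 1 = p.length by omega, p.getVert_length]
    rw [he] at ha
    subst hzy
    exact ⟨ha.2, ha.1⟩
  · have hf0 : p.getVert 0 ≤ z := by rw [p.getVert_zero]; exact hz.1
    have hfn : ¬ p.getVert p.length ≤ z := by
      rw [p.getVert_length]
      exact fun h => hzy (le_antisymm hz.2 h)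
    obtain ⟨i, hi, h1, h2⟩ := exists_switch (f := fun i => p.getVert i ≤ z) p.length hf0 hfn
    have ha := p.adj_getVert_succ (i := i) hi
    have hnz : ¬ z ≤ p.getVert (i + 1) := fun h => ha.1 (h1.trans h)
    have hlt : i + 1 < p.length := by
      rcases lt_or_eq_of_le (Nat.succ_le_of_lt hi) with h | h
      · exact h
      · exfalso
        rw [show i + 1 = p.length from h, p.getVert_length] at hnz
        exact hnz hz.2
    exact ⟨i + 1, by omega, by omega, hnz, h2⟩
end

section
/- Let ν be an uncountable cardinal and P a poset with no infinite antichain such that Cov(P) ≥ ν. Then there is a finite antichain L of P (possibly empty) such that the induced subposet Q on the set of elements incomparable to every member of L satisfies Cov(Q) ≥ ν and Cov(Q restricted to Inc_x(Q)) < ν for every x ∈ Q. -/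
open Cardinal

/-- The set of elements of a poset incomparable to `a`. -/
def incSet {α : Type*} [PartialOrder α] (a : α) : Set α := {y | ¬ a ≤ y ∧ ¬ y ≤ a}

theorem exists_antichain_reduction {α : Type u} [PartialOrder α] (ν : Cardinal)
    (hν : ℵ₀ < ν)
    (hfa : ∀ A : Set α, IsAntichain (· ≤ ·) A → A.Finite)
    (hcov : ν ≤ chainCov (Set.univ : Set α)) :
    ∃ L : Finset α, IsAntichain (· ≤ ·) (L : Set α) ∧
      (ν ≤ chainCov {x | ∀ a ∈ L, x ∈ incSet a}) ∧
      ∀ x ∈ {x | ∀ a ∈ L, x ∈ incSet a},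
        chainCov ({y | ∀ a ∈ L, y ∈ incSet a} ∩ incSet x) < ν := by
  classical
  by_contra h
  push_neg at h
  have key : ∀ L : Finset α, IsAntichain (· ≤ ·) (L : Set α) →
      ν ≤ chainCov {x | ∀ a ∈ L, x ∈ incSet a} →
      ∃ x, x ∈ {x | ∀ a ∈ L, x ∈ incSet a} ∧
        ν ≤ chainCov ({y | ∀ a ∈ L, y ∈ incSet a} ∩ incSet x) := by
    intro L hL hc
    obtain ⟨x, hx, hx2⟩ := h L hL hc
    exact ⟨x, hx, hx2⟩
  have hnone : Nonempty α := by
    by_contra hna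
    rw [not_nonempty_iff] at hna
    have h0 : (0 : Cardinal) ∈ {c : Cardinal | ∃ F : Set (Set α),
        (∀ T ∈ F, T ⊆ (Set.univ : Set α) ∧ IsChain (· ≤ ·) T) ∧ ⋃₀ F = Set.univ ∧ #F = c} := by
      refine ⟨∅, by simp, ?_, by simp⟩
      simp [Set.univ_eq_empty_iff.mpr hna]
    have : chainCov (Set.univ : Set α) = 0 :=
      le_antisymm (csInf_le' h0) zero_le
    rw [this] at hcov
    exact absurd (lt_of_lt_of_le hν hcov) (by simp)
  obtain ⟨x0⟩ := hnone
  haveI : Inhabited α := ⟨x0⟩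
  choose! g hg1 hg2 using key
  -- key set rewriting lemma
  have Qins : ∀ (b : α) (L : Finset α),
      {y | ∀ a ∈ insert b L, y ∈ incSet a} =
        {y | ∀ a ∈ L, y ∈ incSet a} ∩ incSet b := by
    intro b L
    ext y
    simp only [Set.mem_setOf_eq, Finset.mem_insert, Set.mem_inter_iff]
    constructor
    · intro hy
      exact ⟨fun a ha => hy a (Or.inr ha), hy b (Or.inl rfl)⟩
    · rintro ⟨h1, h2⟩ a (rfl | ha)
      · exact h2
      · exact h1 a ha
  -- the increasing sequence of antichains
  obtain ⟨F, hF0, hFs⟩ : ∃ F : ℕ → Finset α, F 0 = ∅ ∧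
      ∀ n, F (n + 1) = insert (g (F n)) (F n) :=
    ⟨fun n => Nat.rec ∅ (fun _ L => insert (g L) L) n, rfl, fun _ => rfl⟩
  have inv : ∀ n, IsAntichain (· ≤ ·) ((F n : Finset α) : Set α) ∧
      ν ≤ chainCov {x | ∀ a ∈ F n, x ∈ incSet a} := by
    intro n
    induction n with
    | zero =>
      constructor
      · simp [hF0, IsAntichain]
      · have : {x : α | ∀ a ∈ (∅ : Finset α), x ∈ incSet a} = Set.univ := by
          ext y; simp
        rw [hF0, this]; exact hcov
    | succ n ih =>
      obtain ⟨hA, hC⟩ := ih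
      have hb := hg1 (F n) hA hC
      have hb2 := hg2 (F n) hA hC
      set b := g (F n) with hbdef
      have hbinc : ∀ a ∈ F n, b ∈ incSet a := hb
      constructor
      · rw [hFs]
        intro p hp q hq hne hle
        simp only [Finset.coe_insert, Set.mem_insert_iff] at hp hq
        rcases hp with rfl | hp
        · rcases hq with rfl | hq
          · exact hne rfl
          · exact (hbinc q hq).2 hle
        · rcases hq with rfl | hq
          · exact (hbinc p hp).1 hle
          · exact hA hp hq hne hle
      · rw [hFs, Qins]
        exact hb2
  -- the distinguished elements
  set a : ℕ → α := fun n => g (F n) with ha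
  have hmem : ∀ m n, m < n → a m ∈ F n := by
    intro m n hmn
    induction n with
    | zero => omega
    | succ n ihn =>
      rw [hFs]
      rcases Nat.lt_succ_iff_lt_or_eq.mp hmn with h' | h'
      · exact Finset.mem_insert_of_mem (ihn h')
      · subst h'; exact Finset.mem_insert_self _ _
  have hincn : ∀ m n, m < n → a n ∈ incSet (a m) := by
    intro m n hmn
    exact hg1 (F n) (inv n).1 (inv n).2 (a m) (hmem m n hmn)
  have hinj : Function.Injective a := by
    intro m n hmn
    by_contra hne
    rcases Nat.lt_or_ge m n with h' | h'
    · exact (hincn m n h').2 (le_of_eq hmn.symm)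
    · have : n < m := lt_of_le_of_ne h' fun e => hne e.symm
      exact (hincn n m this).2 (le_of_eq hmn)
  have hanti : IsAntichain (· ≤ ·) (Set.range a) := by
    rintro _ ⟨m, rfl⟩ _ ⟨n, rfl⟩ hne hle
    rcases Nat.lt_or_ge m n with h' | h'
    · exact (hincn m n h').1 hle
    · have : n < m := lt_of_le_of_ne h' fun e => hne (by rw [e])
      exact (hincn n m this).2 hle
  have : (Set.range a).Infinite := Set.infinite_range_of_injective hinj
  exact this (hfa _ hanti)
end

section
/- Let ν be a cardinal and P a poset with connected incomparability graph such that Cov(P restricted to Inc_x(P)) < ν for every x ∈ P, and suppose ν is infinite (closed under finite sups). Let x₀ ∈ P and let Q be the subposet on ↑x₀. Then for every y ∈ Q, Cov(Q \ ↑y) < ν. -/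
open Cardinal

lemma chainCov_exists {α : Type*} [PartialOrder α] (S : Set α) :
    ∃ F : Set (Set α),
      (∀ T ∈ F, T ⊆ S ∧ IsChain (· ≤ ·) T) ∧ ⋃₀ F = S ∧ #F = chainCov S := by
  have hne : {c : Cardinal | ∃ F : Set (Set α),
      (∀ T ∈ F, T ⊆ S ∧ IsChain (· ≤ ·) T) ∧ ⋃₀ F = S ∧ #F = c}.Nonempty := by
    refine ⟨#((fun a => ({a} : Set α)) '' S), (fun a => ({a} : Set α)) '' S, ?_, ?_, rfl⟩
    · rintro T ⟨a, ha, rfl⟩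
      exact ⟨Set.singleton_subset_iff.2 ha, Set.subsingleton_singleton.isChain⟩
    · rw [Set.sUnion_image]
      exact Set.biUnion_of_singleton S
  exact csInf_mem hne

lemma chainCov_le_add_of_subset_union {α : Type*} [PartialOrder α] {S S₁ S₂ : Set α}
    (h : S ⊆ S₁ ∪ S₂) : chainCov S ≤ chainCov S₁ + chainCov S₂ := by
  obtain ⟨F₁, hF₁, hU₁, hc₁⟩ := chainCov_exists S₁
  obtain ⟨F₂, hF₂, hU₂, hc₂⟩ := chainCov_exists S₂
  set G : Set (Set α) := ((· ∩ S) '' F₁) ∪ ((· ∩ S) '' F₂) with hG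
  have hmem : ∀ T ∈ G, T ⊆ S ∧ IsChain (· ≤ ·) T := by
    rintro T (⟨U, hU, rfl⟩ | ⟨U, hU, rfl⟩)
    · exact ⟨Set.inter_subset_right, ((hF₁ U hU).2.mono Set.inter_subset_left)⟩
    · exact ⟨Set.inter_subset_right, ((hF₂ U hU).2.mono Set.inter_subset_left)⟩
  have hU : ⋃₀ G = S := by
    apply Set.Subset.antisymm
    · exact Set.sUnion_subset fun T hT => (hmem T hT).1
    · intro x hx
      rcases h hx with hx1 | hx2
      · rw [← hU₁] at hx1
        obtain ⟨U, hU, hxU⟩ := hx1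
        exact ⟨U ∩ S, Or.inl ⟨U, hU, rfl⟩, hxU, hx⟩
      · rw [← hU₂] at hx2
        obtain ⟨U, hU, hxU⟩ := hx2
        exact ⟨U ∩ S, Or.inr ⟨U, hU, rfl⟩, hxU, hx⟩
  have h1 : chainCov S ≤ #G := csInf_le' ⟨G, hmem, hU, rfl⟩
  refine h1.trans ?_
  calc #G ≤ #((· ∩ S) '' F₁) + #((· ∩ S) '' F₂) := Cardinal.mk_union_le _ _
    _ ≤ #F₁ + #F₂ := add_le_add (Cardinal.mk_image_le) (Cardinal.mk_image_le)
    _ = chainCov S₁ + chainCov S₂ := by rw [hc₁, hc₂]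

lemma chainCov_empty {α : Type*} [PartialOrder α] : chainCov (∅ : Set α) = 0 := by
  have : chainCov (∅ : Set α) ≤ 0 := by
    refine csInf_le' ⟨∅, ?_, ?_, ?_⟩
    · rintro T ⟨⟩
    · simp
    · simp
  exact le_antisymm this zero_le

theorem cov_up_diff_lt {α : Type u} [PartialOrder α] (ν : Cardinal)
    (hν : ℵ₀ ≤ ν)
    (hconn : (incGraph α).Connected)
    (hinc : ∀ x : α, chainCov (incSet x) < ν) (x₀ : α) :
    ∀ y ∈ Set.Ici x₀, chainCov (Set.Ici x₀ \ Set.Ici y) < ν := by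
  -- step along an edge of the incomparability graph
  have step : ∀ y y' : α, (incGraph α).Adj y y' →
      chainCov (Set.Ici x₀ \ Set.Ici y) < ν →
      chainCov (Set.Ici x₀ \ Set.Ici y') < ν := by
    intro y y' hadj hy
    have hsub : Set.Ici x₀ \ Set.Ici y' ⊆ (Set.Ici x₀ \ Set.Ici y) ∪ incSet y' := by
      rintro z ⟨hz0, hz'⟩
      by_cases hyz : y ≤ z
      · refine Or.inr ⟨fun h => hz' h, fun h => hadj.1 (hyz.trans h)⟩
      · exact Or.inl ⟨hz0, hyz⟩
    have := chainCov_le_add_of_subset_union hsub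
    exact this.trans_lt (Cardinal.add_lt_of_lt hν hy (hinc y'))
  -- propagate along walks
  have walk : ∀ (y y' : α), (incGraph α).Walk y y' →
      chainCov (Set.Ici x₀ \ Set.Ici y) < ν →
      chainCov (Set.Ici x₀ \ Set.Ici y') < ν := by
    intro y y' w
    induction w with
    | nil => exact id
    | cons h _ ih => exact fun hy => ih (step _ _ h hy)
  intro y _
  obtain ⟨w⟩ := hconn x₀ y
  refine walk x₀ y w ?_
  have : Set.Ici x₀ \ Set.Ici x₀ = (∅ : Set α) := by simp
  rw [this, chainCov_empty]
  exact lt_of_lt_of_le aleph0_pos hν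
end

section
/- Let ν be an uncountable limit cardinal with cofinality θ, let (κ_α⁺)_{α<θ} be a family of successor cardinals less than ν with supremum ν, and let P be a poset with no infinite antichain such that Cov(P) ≥ ν and Cov(P \ ↑x) < ν for every x ∈ P. Assume moreover that for every cardinal μ < ν and every x ∈ P with Cov(↑x) > μ⁺, ↑x contains a pair of points a < b with Cov([a,b)) ≥ μ. Then there is an increasing sequence (x_α)_{α<θ} in P such that Cov([x_α, x_{α+1})) ≥ κ_α⁺ for every α < θ. -/
open Cardinal

section aux
variable {α : Type u} [PartialOrder α]

lemma chainCov_set_nonempty (S : Set α) :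
    {c : Cardinal | ∃ F : Set (Set α),
      (∀ T ∈ F, T ⊆ S ∧ IsChain (· ≤ ·) T) ∧ ⋃₀ F = S ∧ #F = c}.Nonempty := by
  refine ⟨_, (fun x => ({x} : Set α)) '' S, ?_, ?_, rfl⟩
  · rintro T ⟨x, hx, rfl⟩
    exact ⟨Set.singleton_subset_iff.2 hx, Set.Subsingleton.isChain (Set.subsingleton_singleton)⟩
  · ext z
    simp

lemma chainCov_spec (S : Set α) : ∃ F : Set (Set α),
    (∀ T ∈ F, T ⊆ S ∧ IsChain (· ≤ ·) T) ∧ ⋃₀ F = S ∧ #F = chainCov S :=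
  csInf_mem (chainCov_set_nonempty S)

lemma chainCov_le_of_cover {S : Set α} {F : Set (Set α)}
    (h1 : ∀ T ∈ F, T ⊆ S ∧ IsChain (· ≤ ·) T) (h2 : ⋃₀ F = S) : chainCov S ≤ #F :=
  csInf_le (OrderBot.bddBelow _) ⟨F, h1, h2, rfl⟩

lemma chainCov_mono {T S : Set α} (h : T ⊆ S) : chainCov T ≤ chainCov S := by
  obtain ⟨F, hF1, hF2, hF3⟩ := chainCov_spec S
  have := chainCov_le_of_cover (S := T) (F := (fun C => C ∩ T) '' F) ?_ ?_
  · exact this.trans (hF3 ▸ Cardinal.mk_image_le)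
  · rintro C ⟨D, hD, rfl⟩
    exact ⟨Set.inter_subset_right, ((hF1 D hD).2).mono Set.inter_subset_left⟩
  · rw [Set.sUnion_image]
    ext z
    constructor
    · intro h'
      obtain ⟨C, hC, _, hz⟩ := Set.mem_iUnion₂.1 h'
      exact hz
    · intro hz
      have : z ∈ ⋃₀ F := hF2.symm ▸ h hz
      obtain ⟨C, hC, hzC⟩ := this
      exact Set.mem_biUnion hC ⟨hzC, hz⟩

lemma chainCov_inter_Ici_nonempty {ν : Cardinal.{u}} (hν : ℵ₀ < ν)
    (hcov : ν ≤ chainCov (Set.univ : Set α))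
    (hup : ∀ x : α, chainCov (Set.Ici x)ᶜ < ν)
    {ι : Type u} (hι : #ι < ν.ord.cof) (y : ι → α) :
    (⋂ i, Set.Ici (y i)).Nonempty := by
  by_contra h
  have hU : ⋃ i, (Set.Ici (y i))ᶜ = Set.univ := by
    rw [← Set.compl_iInter, Set.not_nonempty_iff_eq_empty.1 h, Set.compl_empty]
  choose F hF1 hF2 hF3 using fun i => chainCov_spec ((Set.Ici (y i))ᶜ)
  have hle : chainCov (Set.univ : Set α) ≤ #(⋃ i, F i) := by
    refine chainCov_le_of_cover ?_ ?_
    · rintro T hT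
      obtain ⟨i, hi⟩ := Set.mem_iUnion.1 hT
      exact ⟨Set.subset_univ _, (hF1 i T hi).2⟩
    · rw [Set.sUnion_iUnion]
      simp only [hF2]
      exact hU
  have hlt2 : #(⋃ i, F i) < ν := by
    refine lt_of_le_of_lt (Cardinal.mk_iUnion_le F) ?_
    refine Cardinal.mul_lt_of_lt hν.le (hι.trans_le (Ordinal.cof_ord_le ν)) ?_
    refine lt_of_le_of_lt (ciSup_mono (Cardinal.bddAbove_range _) fun i => (hF3 i).le) ?_
    exact Ordinal.iSup_lt hι fun i => hup (y i)
  exact absurd (hcov.trans_lt (hle.trans_lt hlt2)) (lt_irrefl ν)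

lemma le_chainCov_Ici {ν : Cardinal.{u}} (hν : ℵ₀ < ν)
    (hcov : ν ≤ chainCov (Set.univ : Set α))
    (hup : ∀ x : α, chainCov (Set.Ici x)ᶜ < ν) (x : α) :
    ν ≤ chainCov (Set.Ici x) := by
  by_contra h
  push_neg at h
  obtain ⟨F, hF1, hF2, hF3⟩ := chainCov_spec (Set.Ici x)
  obtain ⟨G, hG1, hG2, hG3⟩ := chainCov_spec ((Set.Ici x)ᶜ)
  have hle : chainCov (Set.univ : Set α) ≤ #(F ∪ G : Set (Set α)) := by
    refine chainCov_le_of_cover ?_ ?_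
    · rintro T (hT | hT)
      exacts [⟨Set.subset_univ _, (hF1 T hT).2⟩, ⟨Set.subset_univ _, (hG1 T hT).2⟩]
    · rw [Set.sUnion_union, hF2, hG2, Set.union_compl_self]
  have : chainCov (Set.univ : Set α) < ν :=
    lt_of_le_of_lt (hle.trans (Cardinal.mk_union_le F G))
      (by rw [hF3, hG3]; exact Cardinal.add_lt_of_lt hν.le h (hup x))
  exact absurd (hcov.trans_lt this) (lt_irrefl ν)

end aux

theorem exists_increasing_sequence {α : Type u} [PartialOrder α] (ν : Cardinal)
    (hν : ℵ₀ < ν) (hlim : Order.IsSuccLimit ν)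
    (κs : Ordinal → Cardinal)
    (hsucc : ∀ o < ν.ord.cof.ord, ∃ μ : Cardinal, κs o = Order.succ μ)
    (hlt : ∀ o < ν.ord.cof.ord, κs o < ν)
    (hsup : ∀ c < ν, ∃ o < ν.ord.cof.ord, c ≤ κs o)
    (hfa : ∀ A : Set α, IsAntichain (· ≤ ·) A → A.Finite)
    (hcov : ν ≤ chainCov (Set.univ : Set α))
    (hup : ∀ x : α, chainCov (Set.Ici x)ᶜ < ν)
    (hinterval : ∀ μ < ν, ∀ x : α, Order.succ μ < chainCov (Set.Ici x) →
      ∃ a b : α, x ≤ a ∧ a < b ∧ μ ≤ chainCov (Set.Ico a b)) :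
    ∃ x : Ordinal → α,
      (∀ o₁ o₂ : Ordinal, o₁ < o₂ → o₂ < ν.ord.cof.ord → x o₁ ≤ x o₂) ∧
      ∀ o < ν.ord.cof.ord, κs o ≤ chainCov (Set.Ico (x o) (x (o + 1))) := by
  have hIci : ∀ z : α, ν ≤ chainCov (Set.Ici z) := le_chainCov_Ici hν hcov hup
  have hcof0 : ℵ₀ ≤ ν.ord.cof := Ordinal.aleph0_le_cof.2 (Cardinal.isSuccLimit_ord hν.le)
  have hcof_lim : Order.IsSuccLimit (ν.ord.cof.ord) :=
    Cardinal.isSuccLimit_ord hcof0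
  -- step function
  have hstep : ∀ (o : Ordinal) (z : α), ∃ p : α × α, o < ν.ord.cof.ord →
      z ≤ p.1 ∧ p.1 < p.2 ∧ κs o ≤ chainCov (Set.Ico p.1 p.2) := by
    intro o z
    by_cases h : o < ν.ord.cof.ord
    · obtain ⟨a, b, h1, h2, h3⟩ := hinterval (κs o) (hlt o h) z
        ((hlim.succ_lt (hlt o h)).trans_le (hIci z))
      exact ⟨(a, b), fun _ => ⟨h1, h2, h3⟩⟩
    · exact ⟨(z, z), fun h' => absurd h' h⟩
  choose P hP using hstep
  have hα : Nonempty α := by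
    obtain ⟨y, -⟩ := chainCov_inter_Ici_nonempty hν hcov hup
      (ι := PEmpty.{u+1}) (by simpa using hcof0.trans_lt' Cardinal.aleph0_pos)
      (fun i => i.elim)
    exact ⟨y⟩
  have pick_ex : ∀ (o : Ordinal) (prev : ∀ o' < o, α), ∃ y : α,
      o < ν.ord.cof.ord → ∀ o' (h' : o' < o), (P o' (prev o' h')).2 ≤ y := by
    intro o prev
    by_cases h : o < ν.ord.cof.ord
    · have hcard : #o.ToType < ν.ord.cof := by
        rw [Cardinal.mk_toType]; exact Cardinal.lt_ord.1 h
      obtain ⟨y, hy⟩ := chainCov_inter_Ici_nonempty hν hcov hup hcard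
        (fun i => (P ((Ordinal.ToType.mk (o := o)).symm i).1
          (prev _ (Set.mem_Iio.mp ((Ordinal.ToType.mk (o := o)).symm i).2))).2)
      refine ⟨y, fun _ o' h' => ?_⟩
      have := Set.mem_iInter.1 hy ((Ordinal.ToType.mk (o := o)) ⟨o', h'⟩)
      rwa [OrderIso.symm_apply_apply] at this
    · exact ⟨Classical.arbitrary α, fun h' => absurd h' h⟩
  choose pick hpick using pick_ex
  let x : Ordinal → α := Ordinal.lt_wf.fix (C := fun _ => α) (fun o ih => pick o ih)
  have hxeq : ∀ o, x o = pick o (fun o' _ => x o') := fun o =>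
    WellFounded.fix_eq Ordinal.lt_wf _ o
  have hkey : ∀ o, o < ν.ord.cof.ord → ∀ o' (h' : o' < o), (P o' (x o')).2 ≤ x o := by
    intro o ho o' h'
    rw [hxeq o]
    exact hpick o (fun o'' _ => x o'') ho o' h'
  refine ⟨x, ?_, ?_⟩
  · intro o₁ o₂ h h₂
    obtain ⟨h1, h2, -⟩ := hP o₁ (x o₁) (h.trans h₂)
    exact (h1.trans h2.le).trans (hkey o₂ h₂ o₁ h)
  · intro o ho
    obtain ⟨h1, h2, h3⟩ := hP o (x o) ho
    have hsucclt : o + 1 < ν.ord.cof.ord := by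
      rw [Ordinal.add_one_eq_succ]; exact hcof_lim.succ_lt ho
    have hb : (P o (x o)).2 ≤ x (o + 1) := by
      refine hkey (o + 1) hsucclt o ?_
      rw [Ordinal.add_one_eq_succ]; exact Order.lt_succ o
    refine h3.trans (chainCov_mono ?_)
    intro z hz
    exact ⟨h1.trans hz.1, hz.2.trans_le hb⟩
end

section
/- Let Q = ν × ν⁺ be the product of the cardinals ν and ν⁺ (ν infinite) ordered componentwise, and let u = (0, ν) ∈ Q. Then Cov(Q \ ↑u) ≥ ν, since Q \ ↑u contains a copy of ν × ν ordered componentwise, and Cov(ν × ν) = ν for ν regular. -/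
open Cardinal

lemma covSet_nonempty {α : Type*} [PartialOrder α] (S : Set α) :
    {c : Cardinal | ∃ F : Set (Set α),
      (∀ T ∈ F, T ⊆ S ∧ IsChain (· ≤ ·) T) ∧ ⋃₀ F = S ∧ #F = c}.Nonempty := by
  refine ⟨_, (fun x => ({x} : Set α)) '' S, ?_, ?_, rfl⟩
  · rintro T ⟨x, hx, rfl⟩
    exact ⟨Set.singleton_subset_iff.2 hx, Set.Subsingleton.isChain (Set.subsingleton_singleton)⟩
  · ext y
    simp [Set.mem_sUnion]

/-- The key lower bound: any family of chains covering `ν.ord.ToType × ν.ord.ToType`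
has cardinality at least `ν`, for regular `ν`. -/
lemma key_lower (ν : Cardinal.{u}) (hν : ℵ₀ ≤ ν) (hreg : ν.IsRegular)
    (F : Set (Set (ν.ord.ToType × ν.ord.ToType)))
    (hch : ∀ T ∈ F, IsChain (· ≤ ·) T)
    (hcov : ∀ p : ν.ord.ToType × ν.ord.ToType, ∃ T ∈ F, p ∈ T) :
    ν ≤ #F := by
  haveI : IsWellOrder ν.ord.ToType (· < ·) := isWellOrder_lt
  by_contra hlt
  push_neg at hlt
  haveI : NoMaxOrder ν.ord.ToType := Cardinal.noMaxOrder hν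
  haveI : Nonempty ν.ord.ToType := by
    rw [Ordinal.nonempty_toType_iff]
    exact hreg.ord_pos.ne'
  -- Claim 1: every column is unboundedly met by some chain of the family.
  have claim1 : ∀ α : ν.ord.ToType, ∃ T ∈ F, ∀ β₀, ∃ β, β₀ ≤ β ∧ (α, β) ∈ T := by
    intro α
    by_contra hc
    push_neg at hc
    choose b hb using hc
    have hS : #(Set.range fun T : F => b T T.2) <
        Ordinal.cof (Ordinal.type ((· < ·) : ν.ord.ToType → ν.ord.ToType → Prop)) := by
      rw [Ordinal.type_toType, hreg.cof_eq]
      exact lt_of_le_of_lt mk_range_le hlt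
    obtain ⟨c, hc⟩ : ∃ c, ∀ x ∈ Set.range (fun T : F => b T T.2), x < c := by
      by_contra hno
      push_neg at hno
      have h1 := Order.cof_le (s := Set.range fun T : F => b T T.2) hno
      rw [Ordinal.cof_toType, hreg.cof_eq] at h1
      exact absurd (lt_of_le_of_lt mk_range_le hlt) (not_lt_of_ge h1)
    obtain ⟨T, hT, hmem⟩ := hcov (α, c)
    exact hb T hT c (le_of_lt (hc _ ⟨⟨T, hT⟩, rfl⟩)) hmem
  -- Claim 2: a chain unbounded on column α misses all later columns.
  have claim2 : ∀ T ∈ F, ∀ α α' : ν.ord.ToType, α < α' →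
      (∀ β₀, ∃ β, β₀ ≤ β ∧ (α, β) ∈ T) → ∀ β', (α', β') ∉ T := by
    intro T hT α α' hαα' hunb β' hmem
    obtain ⟨β'', hβ''⟩ := exists_gt β'
    obtain ⟨β, hβ, hβmem⟩ := hunb β''
    have hne : ((α, β) : ν.ord.ToType × ν.ord.ToType) ≠ (α', β') := by
      intro h
      exact absurd (congrArg Prod.fst h) (ne_of_lt hαα')
    rcases hch T hT hβmem hmem hne with h | h
    · exact absurd h.2 (not_le_of_gt (lt_of_lt_of_le hβ'' hβ))
    · exact absurd h.1 (not_le_of_gt hαα')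
  choose t ht hunb using claim1
  have hinj : Function.Injective (fun α : ν.ord.ToType => (⟨t α, ht α⟩ : F)) := by
    intro α α' h
    simp only [Subtype.mk.injEq] at h
    by_contra hne
    rcases lt_or_gt_of_ne hne with hlt' | hlt'
    · obtain ⟨β, _, hβmem⟩ := hunb α' Classical.ofNonempty
      rw [← h] at hβmem
      exact claim2 (t α) (ht α) α α' hlt' (hunb α) β hβmem
    · obtain ⟨β, _, hβmem⟩ := hunb α Classical.ofNonempty
      rw [h] at hβmem
      exact claim2 (t α') (ht α') α' α hlt' (hunb α') β hβmem
  have : ν ≤ #F := by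
    calc ν = #ν.ord.ToType := (Cardinal.mk_ord_toType ν).symm
    _ ≤ #F := Cardinal.mk_le_of_injective hinj
  exact absurd this (not_le_of_gt hlt)

/-- The canonical embedding of `ν.ord.ToType` into `(succ ν).ord.ToType`. -/
noncomputable def gmap (ν : Cardinal.{u}) : ν.ord.ToType → (Order.succ ν).ord.ToType :=
  fun a => Ordinal.ToType.mk (o := (Order.succ ν).ord)
    ⟨((Ordinal.ToType.mk (o := ν.ord)).symm a).1,
      Set.mem_Iio.2 ((Set.mem_Iio.1 ((Ordinal.ToType.mk (o := ν.ord)).symm a).2).trans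
        (Cardinal.ord_lt_ord.2 (Order.lt_succ ν)))⟩

lemma gmap_le_gmap (ν : Cardinal.{u}) (a a' : ν.ord.ToType) :
    gmap ν a ≤ gmap ν a' ↔ a ≤ a' := by
  unfold gmap
  rw [OrderIso.le_iff_le, Subtype.mk_le_mk, Subtype.coe_le_coe, OrderIso.le_iff_le]

lemma gmap_lt (ν : Cardinal.{u}) (hν : ℵ₀ ≤ ν) (a : ν.ord.ToType) :
    gmap ν a < Ordinal.ToType.mk (o := (Order.succ ν).ord)
      ⟨ν.ord, by exact_mod_cast Cardinal.ord_lt_ord.2 (Order.lt_succ ν)⟩ := by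
  unfold gmap
  rw [OrderIso.lt_iff_lt, Subtype.mk_lt_mk]
  exact Set.mem_Iio.1 ((Ordinal.ToType.mk (o := ν.ord)).symm a).2

/-- The canonical order embedding of the square into the bigger rectangle. -/
noncomputable def femb (ν : Cardinal.{u}) : ν.ord.ToType × ν.ord.ToType ↪o
    ν.ord.ToType × (Order.succ ν).ord.ToType :=
  ⟨⟨fun p => (p.1, gmap ν p.2), by
    intro p q h
    simp only [Prod.mk.injEq] at h
    exact Prod.ext h.1 (le_antisymm ((gmap_le_gmap ν _ _).1 h.2.le)
      ((gmap_le_gmap ν _ _).1 h.2.ge))⟩, by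
    intro p q
    simp only [Function.Embedding.coeFn_mk, Prod.mk_le_mk, Prod.le_def]
    exact and_congr Iff.rfl (gmap_le_gmap ν p.2 q.2)⟩

theorem cov_prod_minus_up (ν : Cardinal.{u}) (hν : ℵ₀ ≤ ν) (hreg : ν.IsRegular)
    (u : ν.ord.ToType × (Order.succ ν).ord.ToType)
    (hu1 : u.1 = Ordinal.ToType.mk (o := ν.ord)
      ⟨0, by simpa using (Cardinal.omega0_le_ord.2 hν).trans_lt' Ordinal.omega0_pos⟩)
    (hu2 : u.2 = Ordinal.ToType.mk (o := (Order.succ ν).ord)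
      ⟨ν.ord, by exact_mod_cast Cardinal.ord_lt_ord.2 (Order.lt_succ ν)⟩) :
    ν ≤ chainCov ((Set.Ici u)ᶜ) ∧
      (∃ f : ν.ord.ToType × ν.ord.ToType ↪o
          ν.ord.ToType × (Order.succ ν).ord.ToType,
        Set.range f ⊆ (Set.Ici u)ᶜ) ∧
      chainCov (Set.univ : Set (ν.ord.ToType × ν.ord.ToType)) = ν := by
  haveI : Nonempty ν.ord.ToType := by
    rw [Ordinal.nonempty_toType_iff]
    exact hreg.ord_pos.ne'
  have hrange : Set.range (femb ν) ⊆ (Set.Ici u)ᶜ := by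
    rintro p ⟨q, rfl⟩
    intro hp
    have h2 : u.2 ≤ gmap ν q.2 := hp.2
    rw [hu2] at h2
    exact absurd h2 (not_le_of_gt (gmap_lt ν hν q.2))
  -- chainCov of the full square is at most ν (cover by columns)
  have hle : chainCov (Set.univ : Set (ν.ord.ToType × ν.ord.ToType)) ≤ ν := by
    have hmk : #(Set.range fun α : ν.ord.ToType =>
        {p : ν.ord.ToType × ν.ord.ToType | p.1 = α}) = ν := by
      rw [Cardinal.mk_range_eq _ ?_, Cardinal.mk_ord_toType]
      intro α α' h
      exact (Set.ext_iff.1 h (α, Classical.ofNonempty)).1 rfl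
    refine csInf_le' ⟨Set.range fun α : ν.ord.ToType =>
      {p : ν.ord.ToType × ν.ord.ToType | p.1 = α}, ?_, ?_, hmk⟩
    · rintro T ⟨α, rfl⟩
      refine ⟨Set.subset_univ _, ?_⟩
      intro p hp q hq hne
      rcases le_total p.2 q.2 with h | h
      · exact Or.inl (Prod.le_def.2 ⟨le_of_eq (hp.trans hq.symm), h⟩)
      · exact Or.inr (Prod.le_def.2 ⟨le_of_eq (hq.trans hp.symm), h⟩)
    · ext p
      simp only [Set.mem_sUnion, Set.mem_range, Set.mem_univ, iff_true]
      exact ⟨_, ⟨p.1, rfl⟩, rfl⟩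
  have hge : ν ≤ chainCov (Set.univ : Set (ν.ord.ToType × ν.ord.ToType)) := by
    refine le_csInf (covSet_nonempty _) ?_
    rintro c ⟨F, hF, hcov, rfl⟩
    refine key_lower ν hν hreg F (fun T hT => (hF T hT).2) ?_
    intro p
    have hp : p ∈ ⋃₀ F := hcov ▸ Set.mem_univ p
    obtain ⟨T, hT, hmem⟩ := hp
    exact ⟨T, hT, hmem⟩
  refine ⟨?_, ⟨femb ν, hrange⟩, le_antisymm hle hge⟩
  -- pull back a chain cover of (Ici u)ᶜ through the embedding
  refine le_csInf (covSet_nonempty _) ?_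
  rintro c ⟨F, hF, hcov, rfl⟩
  have hmain := key_lower ν hν hreg ((fun T => (femb ν) ⁻¹' T) '' F) ?_ ?_
  · exact hmain.trans Cardinal.mk_image_le
  · rintro T ⟨T', hT', rfl⟩
    intro p hp q hq hne
    have hfne : femb ν p ≠ femb ν q := fun h => hne ((femb ν).injective h)
    rcases (hF T' hT').2 hp hq hfne with h | h
    · exact Or.inl ((femb ν).le_iff_le.1 h)
    · exact Or.inr ((femb ν).le_iff_le.1 h)
  · intro p
    have hfp : femb ν p ∈ ⋃₀ F := hcov ▸ hrange ⟨p, rfl⟩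
    obtain ⟨T, hT, hmem⟩ := hfp
    exact ⟨(femb ν) ⁻¹' T, ⟨T, hT, rfl⟩, hmem⟩
end

section
/- Let λ be an uncountable regular cardinal and P a poset with no infinite antichain. Then the collection of unbounded ideals of P that contain a cofinal chain of order type λ, ordered by inclusion, has no infinite antichain. -/
open Cardinal

/-- `J` is an ideal: nonempty, downward closed and up-directed. -/
def IsIdealSet {α : Type*} [PartialOrder α] (J : Set α) : Prop :=
  J.Nonempty ∧ IsLowerSet J ∧ DirectedOn (· ≤ ·) J

/-- `J` is unbounded: no single element majorizes it. -/
def IsUnboundedSet {α : Type*} [PartialOrder α] (J : Set α) : Prop :=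
  ¬ ∃ b, ∀ x ∈ J, x ≤ b

/-- `J` contains a chain of order type `λ` cofinal in `J`. -/
def HasCofinalChainOfType {α : Type*} [PartialOrder α] (J : Set α) (l : Cardinal) : Prop :=
  ∃ C : Set α, C ⊆ J ∧ IsChain (· ≤ ·) C ∧ (∀ y ∈ J, ∃ c ∈ C, y ≤ c) ∧
    Nonempty (l.ord.ToType ≃o C)

/-- In an ideal with a cofinal chain of uncountable regular type, every countable
subset is bounded within the ideal. -/
lemma countable_bounded_of_cofinal_chain {α : Type u} [PartialOrder α] {l : Cardinal}
    (hl : ℵ₀ < l) (hreg : l.IsRegular) {J : Set α} (hJ : HasCofinalChainOfType J l)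
    (s : ℕ → α) (hs : ∀ m, s m ∈ J) : ∃ b ∈ J, ∀ m, s m ≤ b := by
  obtain ⟨C, hCJ, -, hcof, ⟨e⟩⟩ := hJ
  choose c hcC hsc using fun m => hcof (s m) (hs m)
  set g : ℕ → Set.Iio l.ord := fun m =>
    (Ordinal.ToType.mk (o := l.ord)).symm (e.symm ⟨c m, hcC m⟩) with hg
  have hsup : (⨆ m, (g m : Ordinal)) < l.ord := by
    apply Ordinal.iSup_lt_ord_lift
    · rw [hreg.cof_eq]
      simpa using hl
    · exact fun m => (g m).2
  refine ⟨(e ((Ordinal.ToType.mk (o := l.ord)) ⟨_, hsup⟩) : α),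
    hCJ (e _).2, fun m => (hsc m).trans ?_⟩
  have h1 : g m ≤ ⟨_, hsup⟩ := by
    exact_mod_cast Ordinal.le_iSup (fun m => (g m : Ordinal)) m
  have h2 : e.symm ⟨c m, hcC m⟩ ≤ (Ordinal.ToType.mk (o := l.ord)) ⟨_, hsup⟩ := by
    rw [show e.symm ⟨c m, hcC m⟩ = (Ordinal.ToType.mk (o := l.ord)) (g m) by simp [hg]]
    exact (Ordinal.ToType.mk (o := l.ord)).monotone h1
  have h3 : (⟨c m, hcC m⟩ : C) ≤ e ((Ordinal.ToType.mk (o := l.ord)) ⟨_, hsup⟩) := by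
    simpa using e.monotone h2
  exact_mod_cast h3

theorem ideals_no_infinite_antichain {α : Type u} [PartialOrder α] (l : Cardinal)
    (hl : ℵ₀ < l) (hreg : l.IsRegular)
    (hfa : ∀ A : Set α, IsAntichain (· ≤ ·) A → A.Finite) :
    ∀ 𝒜 : Set (Set α),
      (∀ J ∈ 𝒜, IsIdealSet J ∧ IsUnboundedSet J ∧ HasCofinalChainOfType J l) →
      IsAntichain (· ⊆ ·) 𝒜 → 𝒜.Finite := by
  intro 𝒜 h𝒜 hanti
  by_contra hinf
  obtain f := (show 𝒜.Infinite from hinf).natEmbedding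
  -- pick witnesses x n m ∈ f n \ f m for n ≠ m
  have hx : ∀ n m : ℕ, ∃ x, x ∈ (f n : Set α) ∧ (n ≠ m → x ∉ (f m : Set α)) := by
    intro n m
    by_cases hnm : n = m
    · obtain ⟨x, hx⟩ := (h𝒜 _ (f n).2).1.1
      exact ⟨x, hx, fun h => absurd hnm h⟩
    · have hne : (f n : Set α) ≠ (f m : Set α) := fun h =>
        hnm (f.injective (Subtype.ext h))
      have := hanti (f n).2 (f m).2 hne
      obtain ⟨x, hx1, hx2⟩ := Set.not_subset.mp this
      exact ⟨x, hx1, fun _ => hx2⟩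
  choose x hx1 hx2 using hx
  -- for each n, bound the x n m within J n
  have hb : ∀ n : ℕ, ∃ b ∈ (f n : Set α), ∀ m, x n m ≤ b := fun n =>
    countable_bounded_of_cofinal_chain hl hreg (h𝒜 _ (f n).2).2.2 (x n) (hx1 n)
  choose b hb1 hb2 using hb
  -- b n ∉ J m for n ≠ m
  have hbnot : ∀ n m : ℕ, n ≠ m → b n ∉ (f m : Set α) := by
    intro n m hnm hmem
    exact hx2 n m hnm ((h𝒜 _ (f m).2).1.2.1 (hb2 n m) hmem)
  have hbinj : Function.Injective b := by
    intro n m h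
    by_contra hnm
    exact hbnot n m hnm (h ▸ hb1 m)
  have hbanti : IsAntichain (· ≤ ·) (Set.range b) := by
    rintro _ ⟨n, rfl⟩ _ ⟨m, rfl⟩ hne hle
    have hnm : n ≠ m := fun h => hne (h ▸ rfl)
    exact hbnot n m hnm ((h𝒜 _ (f m).2).1.2.1 hle (hb1 m))
  exact (Set.infinite_range_of_injective hbinj) (hfa _ hbanti)
end
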